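/- Under these hypotheses lim_{t↑T} a(t) = Θ̲(T), i.e. the stopping boundary reaches the threshold Θ̲(T) at the terminal time. -/

import Mathlib

open Set Filter Topology

/-- Maximum principle for `u'' + b u' > 0` on an interval: the max is at an endpoint. -/
lemma max_principle_aux {u u' u'' b : ℝ → ℝ} {c2 x1 x3 : ℝ} (hc2 : 0 < c2) (h13 : x1 < x3)
    (hu : ∀ x ∈ Set.Icc x1 x3, HasDerivAt u (u' x) x)
    (hu' : ∀ x ∈ Set.Icc x1 x3, HasDerivAt u' (u'' x) x)
    (hpos : ∀ x ∈ Set.Icc x1 x3, 0 < c2 * u'' x + b x * u' x) :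
    ∀ x ∈ Set.Icc x1 x3, u x ≤ max (u x1) (u x3) := by
  intro y hy
  by_contra hlt
  push_neg at hlt
  have hc : ContinuousOn u (Set.Icc x1 x3) := fun x hxm =>
    (hu x hxm).continuousAt.continuousWithinAt
  obtain ⟨x0, hx0m, hmax⟩ := isCompact_Icc.exists_isMaxOn (nonempty_Icc.2 h13.le) hc
  have hymax : u y ≤ u x0 := hmax hy
  have hx0ne1 : x0 ≠ x1 := by
    rintro rfl
    have := le_max_left (u x0) (u x3)
    linarith
  have hx0ne3 : x0 ≠ x3 := by
    rintro rfl
    have := le_max_right (u x1) (u x0)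
    linarith
  have hx0i : x0 ∈ Set.Ioo x1 x3 :=
    ⟨lt_of_le_of_ne hx0m.1 (Ne.symm hx0ne1), lt_of_le_of_ne hx0m.2 hx0ne3⟩
  -- interior max ⇒ u' x0 = 0
  have hloc : IsLocalMax u x0 := hmax.isLocalMax (Icc_mem_nhds hx0i.1 hx0i.2)
  have hu'0 : u' x0 = 0 := hloc.hasDerivAt_eq_zero (hu x0 hx0m)
  have hu''pos : 0 < u'' x0 := by
    have hp := hpos x0 hx0m
    rw [hu'0] at hp
    nlinarith
  -- slope of u' at x0 tends to u'' x0 > 0, so u' > 0 just right of x0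
  have hslope : Tendsto (slope u' x0) (𝓝[>] x0) (𝓝 (u'' x0)) :=
    (hasDerivAt_iff_tendsto_slope.1 (hu' x0 hx0m)).mono_left
      (nhdsWithin_mono _ (fun z hz => ne_of_gt hz))
  have hev : ∀ᶠ s in 𝓝[>] x0, 0 < slope u' x0 s := hslope.eventually (eventually_gt_nhds hu''pos)
  have hev2 : ∀ᶠ s in 𝓝[>] x0, 0 < u' s := by
    filter_upwards [hev, self_mem_nhdsWithin] with s hs hs'
    have hs0 : (0:ℝ) < s - x0 := sub_pos.2 hs'
    rw [slope_def_field, hu'0, sub_zero] at hs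
    have := mul_pos hs hs0
    rwa [div_mul_cancel₀ _ (ne_of_gt hs0)] at this
  obtain ⟨x4, hx4, hsub⟩ := mem_nhdsGT_iff_exists_Ioo_subset.1 hev2
  set z := (x0 + min x4 x3) / 2 with hz
  have hminpos : x0 < min x4 x3 := lt_min hx4 hx0i.2
  have hx0z : x0 < z := by simp only [hz]; linarith
  have hzlt : z < min x4 x3 := by simp only [hz]; linarith
  have hzmem : z ∈ Set.Icc x1 x3 :=
    ⟨hx0i.1.le.trans hx0z.le, (hzlt.trans_le (min_le_right _ _)).le⟩
  have hsm : StrictMonoOn u (Set.Icc x0 z) := by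
    apply strictMonoOn_of_deriv_pos (convex_Icc _ _)
    · exact hc.mono (Icc_subset_Icc hx0i.1.le hzmem.2)
    · intro x hxi
      rw [interior_Icc] at hxi
      have hxmem : x ∈ Set.Icc x1 x3 :=
        ⟨hx0i.1.le.trans hxi.1.le, (hxi.2.trans (hzlt.trans_le (min_le_right _ _))).le⟩
      rw [(hu x hxmem).deriv]
      exact hsub ⟨hxi.1, hxi.2.trans (hzlt.trans_le (min_le_left _ _))⟩
  have : u x0 < u z := hsm ⟨le_rfl, hx0z.le⟩ ⟨hx0z.le, le_rfl⟩ hx0z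
  exact absurd (hmax hzmem) (not_le.2 this)

set_option maxHeartbeats 1600000 in
/-- under the stated hypotheses, the stopping boundary reaches the
threshold `Θ̲(T) = inf{y : Θ(T,y) > 0}` at the terminal time: `lim_{t↑T} a(t) = Θ̲(T)`. -/
theorem stmt_12 (T σ₀ r : ℝ) (hT : 0 < T) (hσ₀ : 0 < σ₀) (hr : 0 ≤ r)
    (μ : ℝ → ℝ) (hμ : ContDiff ℝ 1 μ)
    (g g' : ℝ → ℝ) (hg : ∀ t, HasDerivAt g (g' t) t) (hg' : Continuous g')
    (h hx : ℝ × ℝ → ℝ)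
    (hh : ContinuousOn h (Set.Icc 0 T ×ˢ Set.univ))
    (hhx : ∀ p ∈ (Set.Icc 0 T ×ˢ Set.univ : Set (ℝ × ℝ)),
      HasDerivAt (fun x => h (p.1, x)) (hx p) p.2)
    (hhxc : ContinuousOn hx (Set.Icc 0 T ×ˢ Set.univ))
    (ΘT : ℝ)
    (hne : {y : ℝ | 0 < g' T - r * g T + h (T, y)}.Nonempty)
    (hbdd : BddBelow {y : ℝ | 0 < g' T - r * g T + h (T, y)})
    (hΘT : ΘT = sInf {y : ℝ | 0 < g' T - r * g T + h (T, y)})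
    (v : ℝ × ℝ → ℝ) (hv : ContinuousOn v (Set.Icc 0 T ×ˢ Set.univ))
    (hvT : ∀ x : ℝ, v (T, x) = g T)
    (a : ℝ → ℝ) (ha : MonotoneOn a (Set.Ico 0 T))
    (haΘ : ∀ t ∈ Set.Ico (0:ℝ) T, a t ≤ ΘT)
    (h1 : ∀ t ∈ Set.Icc (0:ℝ) T, ∀ x : ℝ, g t ≤ v (t, x))
    (h2 : ∀ x : ℝ, ∀ s ∈ Set.Icc (0:ℝ) T, ∀ t ∈ Set.Icc (0:ℝ) T, s ≤ t →
      v (t, x) - g t ≤ v (s, x) - g s)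
    (C : Set (ℝ × ℝ)) (hC : C = {p : ℝ × ℝ | p.1 ∈ Set.Ioo 0 T ∧ a p.1 < p.2})
    (vt vx vxx : ℝ × ℝ → ℝ)
    (hvt : ∀ p ∈ C, HasDerivAt (fun t => v (t, p.2)) (vt p) p.1)
    (hvx : ∀ p ∈ C, HasDerivAt (fun x => v (p.1, x)) (vx p) p.2)
    (hvxx : ∀ p ∈ C, HasDerivAt (fun x => vx (p.1, x)) (vxx p) p.2)
    (hvtc : ContinuousOn vt C) (hvxc : ContinuousOn vx C) (hvxxc : ContinuousOn vxx C)
    (h3 : ∀ p ∈ C, 0 ≤ vt p + σ₀ ^ 2 / 2 * vxx p + μ p.2 * vx p - r * v p + h p)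
    (h4 : ∀ x ≤ ΘT, 0 < hx (T, x)) :
    Filter.Tendsto a (nhdsWithin T (Set.Iio T)) (nhds ΘT) := by
  classical
  -- Step 1: the limit L of a at T⁻ exists
  set L : ℝ := sSup (a '' Set.Ico 0 T) with hLdef
  have himg : (fun t => a (max t 0)) '' Set.Iio T = a '' Set.Ico 0 T := by
    ext z
    constructor
    · rintro ⟨t, ht, rfl⟩
      exact ⟨max t 0, ⟨le_max_right _ _, max_lt ht hT⟩, rfl⟩
    · rintro ⟨t, ⟨ht0, htT⟩, rfl⟩
      exact ⟨t, htT, by simp [max_eq_left ht0]⟩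
  have hmono' : MonotoneOn (fun t => a (max t 0)) (Set.Iio T) := by
    intro s hs t ht hst
    exact ha ⟨le_max_right _ _, max_lt hs hT⟩ ⟨le_max_right _ _, max_lt ht hT⟩
      (max_le_max hst le_rfl)
  have hbdd' : BddAbove ((fun t => a (max t 0)) '' Set.Iio T) := by
    rw [himg]
    exact ⟨ΘT, by rintro z ⟨t, ht, rfl⟩; exact haΘ t ht⟩
  have htend0 : Tendsto (fun t => a (max t 0)) (𝓝[<] T) (𝓝 L) := by
    have := hmono'.tendsto_nhdsLT hbdd'
    rwa [himg] at this
  have htend : Tendsto a (𝓝[<] T) (𝓝 L) := by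
    apply htend0.congr'
    filter_upwards [Ioo_mem_nhdsLT hT] with t ht
    rw [max_eq_left ht.1.le]
  have haL : ∀ t ∈ Set.Ico (0:ℝ) T, a t ≤ L :=
    fun t ht => le_csSup (himg ▸ hbdd') (mem_image_of_mem _ ht)
  have hLΘ : L ≤ ΘT := csSup_le ⟨a 0, mem_image_of_mem _ ⟨le_rfl, hT⟩⟩
    (by rintro z ⟨t, ht, rfl⟩; exact haΘ t ht)
  -- Step 2: reduce to L = ΘT
  suffices hL : L = ΘT by rwa [hL] at htend
  by_contra hLne
  have hLT : L < ΘT := lt_of_le_of_ne hLΘ hLne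
  -- continuity of g
  have hgc : Continuous g := by
    rw [continuous_iff_continuousAt]; exact fun t => (hg t).continuousAt
  -- Θ(T,·) is ≤ 0 strictly below ΘT
  have hΘle : ∀ z, z < ΘT → g' T - r * g T + h (T, z) ≤ 0 := by
    intro z hz
    by_contra hpos
    push_neg at hpos
    have : ΘT ≤ z := hΘT ▸ csInf_le hbdd hpos
    linarith
  have hTD : ∀ y : ℝ, ((T, y) : ℝ × ℝ) ∈ Set.Icc (0:ℝ) T ×ˢ (Set.univ : Set ℝ) :=
    fun y => ⟨⟨hT.le, le_rfl⟩, trivial⟩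
  have hhTc : ContinuousOn (fun y => h (T, y)) (Set.univ : Set ℝ) := by
    intro y _
    exact (hhx (T, y) (hTD y)).continuousAt.continuousWithinAt
  have hΘneg : ∀ z, z < ΘT → g' T - r * g T + h (T, z) < 0 := by
    intro z hz
    set w := (z + ΘT) / 2 with hw
    have hzw : z < w := by simp only [hw]; linarith
    have hwΘ : w < ΘT := by simp only [hw]; linarith
    have hle := hΘle w hwΘ
    have hsm : StrictMonoOn (fun y => h (T, y)) (Set.Icc z w) := by
      apply strictMonoOn_of_deriv_pos (convex_Icc _ _)
      · exact (hhTc.mono (subset_univ _))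
      · intro y hyi
        rw [interior_Icc] at hyi
        rw [(hhx (T, y) (hTD y)).deriv]
        exact h4 y (by linarith [hyi.2])
    have : h (T, z) < h (T, w) := hsm ⟨le_rfl, hzw.le⟩ ⟨hzw.le, le_rfl⟩ hzw
    linarith
  -- Step 3: choose the window [x1, x3]
  obtain ⟨x1, x2, x3, hLx1, h12, h23, hx3Θ⟩ :
      ∃ x1 x2 x3 : ℝ, L < x1 ∧ x1 < x2 ∧ x2 < x3 ∧ x3 < ΘT :=
    ⟨L + (ΘT - L) / 4, L + (ΘT - L) / 2, L + 3 * (ΘT - L) / 4,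
      by linarith, by linarith, by linarith, by linarith⟩
  have h13 : x1 < x3 := h12.trans h23
  -- Step 4: uniform negativity of Θ near (T, [x1,x3])
  set Θf : ℝ × ℝ → ℝ := fun p => g' p.1 - r * g p.1 + h p with hΘf
  have hΘfc : ContinuousOn Θf (Set.Icc (0:ℝ) T ×ˢ (Set.univ : Set ℝ)) := by
    apply ContinuousOn.add
    · exact ((hg'.comp continuous_fst).sub
        (continuous_const.mul (hgc.comp continuous_fst))).continuousOn
    · exact hh
  -- max of Θf(T,·) on [x1,x3] is negative
  have hφc : ContinuousOn (fun y => Θf (T, y)) (Set.Icc x1 x3) := by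
    show ContinuousOn (fun y => g' T - r * g T + h (T, y)) (Set.Icc x1 x3)
    exact continuousOn_const.add (hhTc.mono (subset_univ _))
  clear_value Θf
  obtain ⟨ε, hεpos, hub⟩ :
      ∃ ε : ℝ, 0 < ε ∧ ∀ y ∈ Set.Icc x1 x3, Θf (T, y) ≤ -ε := by
    obtain ⟨xm, hxm, hmaxm⟩ := isCompact_Icc.exists_isMaxOn (nonempty_Icc.2 h13.le) hφc
    refine ⟨-(Θf (T, xm)), ?_, ?_⟩
    · have := hΘneg xm (lt_of_le_of_lt hxm.2 hx3Θ)
      simp only [hΘf] at this ⊢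
      linarith
    · intro y hy
      have hle : Θf (T, y) ≤ Θf (T, xm) := hmaxm hy
      linarith
  -- uniform continuity on the compact strip
  have hK : IsCompact (Set.Icc (0:ℝ) T ×ˢ Set.Icc x1 x3) := isCompact_Icc.prod isCompact_Icc
  have hKD : (Set.Icc (0:ℝ) T ×ˢ Set.Icc x1 x3) ⊆ Set.Icc (0:ℝ) T ×ˢ (Set.univ : Set ℝ) :=
    Set.prod_mono le_rfl (subset_univ _)
  have hUC : UniformContinuousOn Θf (Set.Icc (0:ℝ) T ×ˢ Set.Icc x1 x3) :=
    hK.uniformContinuousOn_of_continuous (hΘfc.mono hKD)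
  obtain ⟨δ, hδpos, hδ⟩ := Metric.uniformContinuousOn_iff.1 hUC (ε / 2) (by linarith)
  obtain ⟨t1, ht1pos, ht1T, ht1δ⟩ :
      ∃ t1 : ℝ, 0 < t1 ∧ t1 < T ∧ T - δ / 2 ≤ t1 :=
    ⟨max (T - δ / 2) (T / 2), lt_of_lt_of_le (by linarith : (0:ℝ) < T / 2) (le_max_right _ _),
      max_lt (by linarith) (by linarith), le_max_left _ _⟩
  have hΘstrip : ∀ t ∈ Set.Ioo t1 T, ∀ y ∈ Set.Icc x1 x3, Θf (t, y) ≤ -ε / 2 := by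
    intro t ht y hy
    have htmem : (t, y) ∈ Set.Icc (0:ℝ) T ×ˢ Set.Icc x1 x3 :=
      ⟨⟨(ht1pos.trans ht.1).le, ht.2.le⟩, hy⟩
    have hTmem : ((T, y) : ℝ × ℝ) ∈ Set.Icc (0:ℝ) T ×ˢ Set.Icc x1 x3 := ⟨⟨hT.le, le_rfl⟩, hy⟩
    have hdist : dist ((t, y) : ℝ × ℝ) ((T, y) : ℝ × ℝ) < δ := by
      rw [Prod.dist_eq]
      simp only [dist_self]
      have hd1 : dist t T < δ := by
        rw [Real.dist_eq, abs_sub_lt_iff]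
        constructor
        · linarith [ht.2]
        · linarith [ht.1]
      simpa [max_lt_iff] using hd1
    have hd2 := hδ _ htmem _ hTmem hdist
    rw [Real.dist_eq, abs_sub_lt_iff] at hd2
    have h2' := hub y hy
    linarith [hd2.1]
  -- Step 5: bound on the drift, choice of A and the barrier ψ
  have hs2pos : 0 < σ₀ ^ 2 := by positivity
  obtain ⟨M, hMnn, hMb⟩ : ∃ M : ℝ, 0 ≤ M ∧ ∀ y ∈ Set.Icc x1 x3, |μ y| ≤ M := by
    obtain ⟨M0, hM0⟩ := isCompact_Icc.exists_bound_of_continuousOn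
      (f := μ) hμ.continuous.continuousOn
    refine ⟨max M0 0, le_max_right _ _, fun y hy => ?_⟩
    have := hM0 y hy
    rw [Real.norm_eq_abs] at this
    exact this.trans (le_max_left _ _)
  obtain ⟨A, hApos, hAle⟩ :
      ∃ A : ℝ, 0 < A ∧ A * (σ₀ ^ 2 + M * (x3 - x1)) ≤ ε / 4 := by
    have hden : 0 < σ₀ ^ 2 + M * (x3 - x1) := by
      nlinarith [mul_nonneg hMnn (by linarith : (0:ℝ) ≤ x3 - x1)]
    refine ⟨(ε / 4) / (σ₀ ^ 2 + M * (x3 - x1)), by positivity, ?_⟩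
    rw [div_mul_cancel₀ _ (ne_of_gt hden)]
  set ψ : ℝ → ℝ := fun y => A * ((y - x1) * (y - x3)) with hψ
  have hψd : ∀ y : ℝ, HasDerivAt ψ (A * (2 * y - x1 - x3)) y := by
    intro y
    have h1' : HasDerivAt (fun y : ℝ => (y - x1) * (y - x3)) ((y - x3) + (y - x1)) y := by
      have := ((hasDerivAt_id y).sub_const x1).mul ((hasDerivAt_id y).sub_const x3)
      exact this.congr_deriv (by simp only [id]; ring)
    have := h1'.const_mul A
    exact this.congr_deriv (by ring)
  have hψd2 : ∀ y : ℝ, HasDerivAt (fun y => A * (2 * y - x1 - x3)) (2 * A) y := by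
    intro y
    have h1' : HasDerivAt (fun y : ℝ => 2 * y - x1 - x3) 2 y := by
      simpa using (((hasDerivAt_id y).const_mul 2).sub_const x1).sub_const x3
    simpa [mul_comm] using h1'.const_mul A
  have hψ1 : ψ x1 = 0 := by simp [hψ]
  have hψ3 : ψ x3 = 0 := by simp [hψ]
  have hψ2neg : ψ x2 < 0 := by
    have h1' : 0 < x2 - x1 := by linarith
    have h3' : 0 < x3 - x2 := by linarith
    simp only [hψ]
    nlinarith [mul_pos hApos (mul_pos h1' h3')]
  -- Step 6: the key estimate for t ∈ (t1, T)
  have hkey : ∀ t ∈ Set.Ioo t1 T, v (t, x2) - ψ x2 ≤ max (v (t, x1)) (v (t, x3)) := by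
    intro t ht
    have htpos : 0 < t := ht1pos.trans ht.1
    have htT : t < T := ht.2
    have hmemC : ∀ y ∈ Set.Icc x1 x3, ((t, y) : ℝ × ℝ) ∈ C := by
      intro y hy
      rw [hC]
      refine ⟨⟨htpos, htT⟩, ?_⟩
      have h' := haL t ⟨htpos.le, htT⟩
      have := hy.1
      linarith
    -- time-derivative bound: vt ≤ g'
    have hvtle : ∀ y ∈ Set.Icc x1 x3, vt (t, y) ≤ g' t := by
      intro y hy
      have hd : HasDerivAt (fun s => v (s, y) - g s) (vt (t, y) - g' t) t :=
        (hvt (t, y) (hmemC y hy)).sub (hg t)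
      have hsl : Tendsto (slope (fun s => v (s, y) - g s) t) (𝓝[>] t)
          (𝓝 (vt (t, y) - g' t)) :=
        (hasDerivAt_iff_tendsto_slope.1 hd).mono_left
          (nhdsWithin_mono _ (fun z hz => ne_of_gt hz))
      have hev : ∀ᶠ s in 𝓝[>] t, slope (fun s => v (s, y) - g s) t s ≤ 0 := by
        filter_upwards [Ioo_mem_nhdsGT htT] with s hs'
        rw [slope_def_field]
        apply div_nonpos_of_nonpos_of_nonneg
        · have := h2 y t ⟨htpos.le, htT.le⟩ s ⟨(htpos.trans hs'.1).le, hs'.2.le⟩ hs'.1.le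
          linarith
        · linarith [hs'.1]
      have := le_of_tendsto hsl hev
      linarith
    -- the pointwise differential inequality
    have hpos : ∀ y ∈ Set.Icc x1 x3,
        0 < σ₀ ^ 2 / 2 * (vxx (t, y) - 2 * A)
          + μ y * (vx (t, y) - A * (2 * y - x1 - x3)) := by
      intro y hy
      have hpde : 0 ≤ vt (t, y) + σ₀ ^ 2 / 2 * vxx (t, y) + μ y * vx (t, y)
          - r * v (t, y) + h (t, y) := h3 (t, y) (hmemC y hy)
      have hΘs' : g' t - r * g t + h (t, y) ≤ -ε / 2 := by
        simpa [hΘf] using hΘstrip t ht y hy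
      have hrv : r * g t ≤ r * v (t, y) :=
        mul_le_mul_of_nonneg_left (h1 t ⟨htpos.le, htT.le⟩ y) hr
      have key : ε / 2 ≤ σ₀ ^ 2 / 2 * vxx (t, y) + μ y * vx (t, y) := by
        linarith [hvtle y hy]
      have hb1 : |μ y * (2 * y - x1 - x3)| ≤ M * (x3 - x1) := by
        rw [abs_mul]
        apply mul_le_mul (hMb y hy) _ (abs_nonneg _) hMnn
        rw [abs_le]
        constructor <;> [linarith [hy.1, hy.2]; linarith [hy.1, hy.2]]
      have hb3 : A * (μ y * (2 * y - x1 - x3)) ≤ A * (M * (x3 - x1)) :=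
        mul_le_mul_of_nonneg_left (abs_le.1 hb1).2 hApos.le
      nlinarith [key, hb3, hAle, hεpos]
    -- apply the maximum principle
    have hres := max_principle_aux (c2 := σ₀ ^ 2 / 2) (b := μ)
      (u := fun y => v (t, y) - ψ y)
      (u' := fun y => vx (t, y) - A * (2 * y - x1 - x3))
      (u'' := fun y => vxx (t, y) - 2 * A)
      (by positivity) h13
      (fun y hy => (hvx (t, y) (hmemC y hy)).sub (hψd y))
      (fun y hy => (hvxx (t, y) (hmemC y hy)).sub (hψd2 y))
      hpos x2 ⟨h12.le, h23.le⟩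
    simp only [hψ1, hψ3, sub_zero] at hres
    exact hres
  -- Step 7: pass to the limit t → T⁻ and contradict ψ x2 < 0
  have hvlim : ∀ xi : ℝ, Tendsto (fun t => v (t, xi)) (𝓝[<] T) (𝓝 (g T)) := by
    intro xi
    have hcw : ContinuousWithinAt v (Set.Icc 0 T ×ˢ (Set.univ : Set ℝ)) (T, xi) :=
      hv.continuousWithinAt (hTD xi)
    have hmap : Tendsto (fun t => ((t, xi) : ℝ × ℝ)) (𝓝[<] T)
        (𝓝[Set.Icc 0 T ×ˢ (Set.univ : Set ℝ)] (T, xi)) := by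
      rw [tendsto_nhdsWithin_iff]
      constructor
      · exact ((continuous_id.prodMk continuous_const).tendsto T).mono_left nhdsWithin_le_nhds
      · filter_upwards [Ioo_mem_nhdsLT hT] with s hs
        exact ⟨⟨hs.1.le, hs.2.le⟩, trivial⟩
    have := hcw.tendsto.comp hmap
    rwa [hvT xi] at this
  have hG : Tendsto (fun t => v (t, x2) - max (v (t, x1)) (v (t, x3))) (𝓝[<] T) (𝓝 0) := by
    have := (hvlim x2).sub ((hvlim x1).max (hvlim x3))
    simpa using this
  have hevk : ∀ᶠ t in 𝓝[<] T, v (t, x2) - max (v (t, x1)) (v (t, x3)) ≤ ψ x2 := by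
    filter_upwards [Ioo_mem_nhdsLT ht1T] with t ht
    linarith [hkey t ht]
  have hfin : (0 : ℝ) ≤ ψ x2 := le_of_tendsto hG hevk
  linarith
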